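/- For m = 4k+1 with k ≥ 3 an integer, define for 0 < 2r < m the quantity σ₁(r) = 4(A(r) − I(r)) where A(r) is the area of the triangle with vertices (0,0), (r,0), (r, 2r/m) and I(r) counts integer points of this triangle with weight 1 for interior points, 1/2 for non-vertex boundary points, and 1/4 for integral vertices other than (0,0). Then σ₁(r) = 4r²/m − 2r + 1. -/

import Mathlib

open MeasureTheory

lemma cg_hull_eq (r m : ℝ) (hr : 0 < r) (hm : 0 < m) :
    convexHull ℝ ({(0, 0), (r, 0), (r, 2 * r / m)} : Set (ℝ × ℝ)) =
      {p : ℝ × ℝ | 0 ≤ p.1 ∧ p.1 ≤ r ∧ 0 ≤ p.2 ∧ m * p.2 ≤ 2 * p.1} := by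
  apply le_antisymm
  · apply convexHull_min
    · rintro p (rfl | rfl | rfl)
      · exact ⟨le_refl 0, hr.le, le_refl 0, by simp⟩
      · exact ⟨hr.le, le_refl r, le_refl 0, by simp [hr.le]⟩
      · refine ⟨hr.le, le_refl r, by positivity, ?_⟩
        rw [mul_div_assoc', mul_comm, mul_div_assoc, div_self hm.ne', mul_one]
    · rintro ⟨x1, y1⟩ ⟨hx1, hx1r, hy1, hxy1⟩ ⟨x2, y2⟩ ⟨hx2, hx2r, hy2, hxy2⟩ a b ha hb hab
      refine ⟨?_, ?_, ?_, ?_⟩ <;> simp [Prod.smul_def, smul_eq_mul] <;> nlinarith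
  · rintro ⟨x, y⟩ ⟨hx, hxr, hy, hxy⟩
    rcases eq_or_lt_of_le hx with h0 | hx0
    · have hy0 : y = 0 := le_antisymm (by nlinarith) hy
      have hx0 : x = 0 := h0.symm
      subst hy0; subst hx0
      exact subset_convexHull ℝ _ (by simp)
    · have hull_cvx := convex_convexHull ℝ ({(0, 0), (r, 0), (r, 2 * r / m)} : Set (ℝ × ℝ))
      have h1 : ((r, 0) : ℝ × ℝ) ∈ convexHull ℝ ({(0, 0), (r, 0), (r, 2 * r / m)} : Set (ℝ × ℝ)) :=
        subset_convexHull ℝ _ (by simp)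
      have h2 : ((r, 2 * r / m) : ℝ × ℝ) ∈ convexHull ℝ ({(0, 0), (r, 0), (r, 2 * r / m)} : Set (ℝ × ℝ)) :=
        subset_convexHull ℝ _ (by simp)
      have h0 : ((0, 0) : ℝ × ℝ) ∈ convexHull ℝ ({(0, 0), (r, 0), (r, 2 * r / m)} : Set (ℝ × ℝ)) :=
        subset_convexHull ℝ _ (by simp)
      set t : ℝ := m * y / (2 * x) with ht
      have ht0 : 0 ≤ t := by positivity
      have ht1 : t ≤ 1 := by rw [div_le_one (by linarith)]; linarith
      have hq := hull_cvx h1 h2 (by linarith : (0:ℝ) ≤ 1 - t) ht0 (by ring)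
      have hxr1 : x / r ≤ 1 := by rw [div_le_one hr]; exact hxr
      have hfin := hull_cvx h0 hq (show (0:ℝ) ≤ 1 - x / r by linarith)
        (show (0:ℝ) ≤ x / r by positivity) (show (1 - x / r) + x / r = 1 by ring)
      convert hfin using 1
      simp only [Prod.smul_def, smul_eq_mul, Prod.mk_add_mk, Prod.ext_iff]
      constructor
      · field_simp
        ring
      · rw [ht]
        field_simp
        ring

lemma cg_vol (r m : ℝ) (hr : 0 < r) (hm : 0 < m) :
    volume {p : ℝ × ℝ | 0 ≤ p.1 ∧ p.1 ≤ r ∧ 0 ≤ p.2 ∧ m * p.2 ≤ 2 * p.1}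
      = ENNReal.ofReal (r ^ 2 / m) := by
  set S : Set (ℝ × ℝ) := {p : ℝ × ℝ | 0 ≤ p.1 ∧ p.1 ≤ r ∧ 0 ≤ p.2 ∧ m * p.2 ≤ 2 * p.1} with hS
  have hmeas : MeasurableSet S := by
    apply MeasurableSet.inter
    · exact measurableSet_le measurable_const measurable_fst
    apply MeasurableSet.inter
    · exact measurableSet_le measurable_fst measurable_const
    apply MeasurableSet.inter
    · exact measurableSet_le measurable_const measurable_snd
    · exact measurableSet_le (measurable_const.mul measurable_snd)
        (measurable_const.mul measurable_fst)
  have hslice : ∀ x : ℝ, volume (Prod.mk x ⁻¹' S)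
      = Set.indicator (Set.Icc 0 r) (fun x => ENNReal.ofReal (2 * x / m)) x := by
    intro x
    by_cases hx : x ∈ Set.Icc (0:ℝ) r
    · rw [Set.indicator_of_mem hx]
      have : Prod.mk x ⁻¹' S = Set.Icc 0 (2 * x / m) := by
        ext y
        simp only [hS, Set.mem_preimage, Set.mem_setOf_eq, Set.mem_Icc]
        constructor
        · rintro ⟨-, -, h1, h2⟩
          exact ⟨h1, by rw [le_div_iff₀ hm]; linarith⟩
        · rintro ⟨h1, h2⟩
          rw [le_div_iff₀ hm] at h2
          exact ⟨hx.1, hx.2, h1, by linarith⟩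
      rw [this, Real.volume_Icc, sub_zero]
    · rw [Set.indicator_of_notMem hx]
      have : Prod.mk x ⁻¹' S = ∅ := by
        ext y
        simp only [hS, Set.mem_preimage, Set.mem_setOf_eq, Set.mem_empty_iff_false, iff_false]
        rintro ⟨h1, h2, -, -⟩
        exact hx ⟨h1, h2⟩
      rw [this, measure_empty]
  rw [Measure.volume_eq_prod, Measure.prod_apply hmeas]
  rw [lintegral_congr hslice, lintegral_indicator measurableSet_Icc]
  rw [← MeasureTheory.ofReal_integral_eq_lintegral_ofReal]
  · congr 1
    rw [MeasureTheory.integral_Icc_eq_integral_Ioc,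
      ← intervalIntegral.integral_of_le hr.le]
    have : ∀ x : ℝ, 2 * x / m = (2 / m) * x := by intro x; ring
    simp_rw [this]
    rw [intervalIntegral.integral_const_mul, integral_id]
    field_simp
    ring
  · exact (Continuous.integrableOn_Icc (by continuity))
  · filter_upwards [MeasureTheory.ae_restrict_mem measurableSet_Icc] with x hx
    have : (0:ℝ) ≤ x := hx.1
    positivity

lemma cg_interior_halfplane : interior {p : ℝ × ℝ | 0 ≤ p.2} = {p : ℝ × ℝ | 0 < p.2} := by
  have h : {p : ℝ × ℝ | 0 ≤ p.2} = Prod.snd ⁻¹' Set.Ici 0 := rfl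
  have h2 : {p : ℝ × ℝ | 0 < p.2} = Prod.snd ⁻¹' Set.Ioi 0 := rfl
  rw [h, h2, ← isOpenMap_snd.preimage_interior_eq_interior_preimage continuous_snd, interior_Ici]

/-- Casson–Gordon lattice-point computation: for `m = 4k+1`, `k ≥ 3`, and `0 < 2r < m`,
`4(A(r) − I(r)) = 4r²/m − 2r + 1`, where `A(r)` is the area of the triangle with vertices
`(0,0)`, `(r,0)`, `(r,2r/m)` and `I(r)` is the weighted count of its lattice points
(weight 1 for interior points, 1/2 for non-vertex boundary points, 1/4 for integral
vertices other than `(0,0)`). -/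
theorem stmt_19 (k m r : ℤ) (hk : 3 ≤ k) (hm : m = 4 * k + 1)
    (hr1 : 0 < 2 * r) (hr2 : 2 * r < m) :
    let V : Set (ℝ × ℝ) := {(0, 0), ((r : ℝ), 0), ((r : ℝ), 2 * (r : ℝ) / (m : ℝ))}
    let T : Set (ℝ × ℝ) := convexHull ℝ V
    let A : ℝ := (volume T).toReal
    let I : ℝ :=
      ({p : ℤ × ℤ | ((p.1 : ℝ), (p.2 : ℝ)) ∈ interior T}.ncard : ℝ)
        + (1 / 2) * ({p : ℤ × ℤ |
            ((p.1 : ℝ), (p.2 : ℝ)) ∈ frontier T ∧ ((p.1 : ℝ), (p.2 : ℝ)) ∉ V}.ncard : ℝ)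
        + (1 / 4) * ({p : ℤ × ℤ |
            ((p.1 : ℝ), (p.2 : ℝ)) ∈ V ∧ ((p.1 : ℝ), (p.2 : ℝ)) ≠ (0, 0)}.ncard : ℝ)
    4 * (A - I) = 4 * (r : ℝ) ^ 2 / (m : ℝ) - 2 * (r : ℝ) + 1 := by
  intro V T A I
  have hrz : 0 < r := by linarith
  have hr : (0:ℝ) < (r:ℝ) := by exact_mod_cast hrz
  have hmz : 0 < m := by linarith
  have hmR : (0:ℝ) < (m:ℝ) := by exact_mod_cast hmz
  have h2rm : 2 * (r:ℝ) < (m:ℝ) := by exact_mod_cast hr2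
  have hT : T = {p : ℝ × ℝ | 0 ≤ p.1 ∧ p.1 ≤ (r:ℝ) ∧ 0 ≤ p.2 ∧ (m:ℝ) * p.2 ≤ 2 * p.1} :=
    cg_hull_eq (r:ℝ) (m:ℝ) hr hmR
  have hclosed : IsClosed T := ((Set.toFinite V).isCompact_convexHull ℝ).isClosed
  -- area
  have hA : A = (r:ℝ) ^ 2 / (m:ℝ) := by
    show (volume T).toReal = _
    rw [hT, cg_vol (r:ℝ) (m:ℝ) hr hmR, ENNReal.toReal_ofReal (by positivity)]
  -- key fact on lattice points of T
  have hlat : ∀ p : ℤ × ℤ, ((p.1 : ℝ), (p.2 : ℝ)) ∈ T → p.2 = 0 ∧ 0 ≤ p.1 ∧ p.1 ≤ r := by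
    intro p hp
    rw [hT] at hp
    obtain ⟨h1, h2, h3, h4⟩ := hp
    simp only at h1 h2 h3 h4
    have hp2lt : ((p.2:ℝ)) < 1 := by
      by_contra hcon
      push_neg at hcon
      nlinarith
    have hp2 : p.2 = 0 := by
      have : (0:ℤ) ≤ p.2 := by exact_mod_cast h3
      have : p.2 < 1 := by exact_mod_cast hp2lt
      omega
    exact ⟨hp2, by exact_mod_cast h1, by exact_mod_cast h2⟩
  have hint : interior T ⊆ {p : ℝ × ℝ | 0 < p.2} := by
    rw [← cg_interior_halfplane]
    apply interior_mono
    rw [hT]; rintro p ⟨-, -, h, -⟩; exact h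
  -- interior lattice points: none
  have hset1 : {p : ℤ × ℤ | ((p.1 : ℝ), (p.2 : ℝ)) ∈ interior T} = ∅ := by
    ext p
    simp only [Set.mem_setOf_eq, Set.mem_empty_iff_false, iff_false]
    intro hp
    have h1 := hint hp
    have h2 := (hlat p (interior_subset hp)).1
    simp only [Set.mem_setOf_eq] at h1
    rw [h2] at h1
    norm_num at h1
  -- boundary non-vertex lattice points
  have hset2 : {p : ℤ × ℤ | ((p.1 : ℝ), (p.2 : ℝ)) ∈ frontier T ∧ ((p.1 : ℝ), (p.2 : ℝ)) ∉ V}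
      = (fun n : ℤ => ((n, 0) : ℤ × ℤ)) '' Set.Icc 1 (r - 1) := by
    ext p
    simp only [Set.mem_setOf_eq, Set.mem_image, Set.mem_Icc]
    constructor
    · rintro ⟨hpf, hpV⟩
      have hpT : ((p.1 : ℝ), (p.2 : ℝ)) ∈ T := by
        have := frontier_subset_closure (s := T) hpf
        rwa [hclosed.closure_eq] at this
      obtain ⟨hp2, hp1a, hp1b⟩ := hlat p hpT
      have hne0 : p.1 ≠ 0 := by
        intro h
        exact hpV (by simp [V, h, hp2])
      have hner : p.1 ≠ r := by
        intro h
        exact hpV (by simp [V, h, hp2])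
      exact ⟨p.1, ⟨by omega, by omega⟩, by rw [← hp2]⟩
    · rintro ⟨n, ⟨hn1, hn2⟩, rfl⟩
      have hn0 : (0:ℝ) ≤ (n:ℝ) := by exact_mod_cast by omega
      have hnr : (n:ℝ) ≤ (r:ℝ) := by exact_mod_cast by omega
      have hmemT : (((n:ℤ) : ℝ), ((0:ℤ) : ℝ)) ∈ T := by
        rw [hT]
        refine ⟨hn0, hnr, by norm_num, ?_⟩
        show (m:ℝ) * ((0:ℤ):ℝ) ≤ 2 * ((n:ℤ):ℝ)
        push_cast
        nlinarith
      constructor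
      · rw [hclosed.frontier_eq]
        refine ⟨hmemT, ?_⟩
        intro hcon
        have := hint hcon
        simp at this
      · intro hcon
        have hn0' : (n:ℝ) ≠ 0 := by
          have : (1:ℝ) ≤ (n:ℝ) := by exact_mod_cast hn1
          linarith
        have hnr' : (n:ℝ) ≠ (r:ℝ) := by
          have : (n:ℝ) ≤ (r:ℝ) - 1 := by exact_mod_cast hn2
          linarith
        have hy : (0:ℝ) ≠ 2 * (r:ℝ) / (m:ℝ) := by
          have : (0:ℝ) < 2 * (r:ℝ) / (m:ℝ) := by positivity
          linarith
        simp only [V, Set.mem_insert_iff, Set.mem_singleton_iff, Prod.mk.injEq,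
          Int.cast_zero] at hcon
        rcases hcon with ⟨h, -⟩ | ⟨h, -⟩ | ⟨-, h⟩
        · exact hn0' h
        · exact hnr' h
        · exact hy h
  -- vertex lattice points
  have hset3 : {p : ℤ × ℤ | ((p.1 : ℝ), (p.2 : ℝ)) ∈ V ∧ ((p.1 : ℝ), (p.2 : ℝ)) ≠ (0, 0)}
      = {((r, 0) : ℤ × ℤ)} := by
    ext p
    simp only [Set.mem_setOf_eq, Set.mem_singleton_iff]
    constructor
    · rintro ⟨hpV, hne⟩
      simp only [V, Set.mem_insert_iff, Set.mem_singleton_iff, Prod.mk.injEq] at hpV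
      rcases hpV with ⟨h1, h2⟩ | ⟨h1, h2⟩ | ⟨h1, h2⟩
      · exact absurd (Prod.ext h1 h2) hne
      · have : p.1 = r := by exact_mod_cast h1
        have : p.2 = 0 := by exact_mod_cast h2
        exact Prod.ext (by exact_mod_cast h1) this
      · exfalso
        have hlt : (p.2 : ℝ) < 1 := by
          rw [h2, div_lt_one hmR]; linarith
        have hgt : (0:ℝ) < (p.2 : ℝ) := by
          rw [h2]; positivity
        have : 0 < p.2 := by exact_mod_cast hgt
        have : p.2 < 1 := by exact_mod_cast hlt
        omega
    · rintro rfl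
      constructor
      · simp [V]
      · simp only [ne_eq, Prod.mk.injEq, Int.cast_zero, not_and]
        intro h
        exact absurd h (by exact_mod_cast hrz.ne')
  -- cardinalities
  have hc1 : ({p : ℤ × ℤ | ((p.1 : ℝ), (p.2 : ℝ)) ∈ interior T}.ncard : ℝ) = 0 := by
    rw [hset1]; simp
  have hc2 : ({p : ℤ × ℤ | ((p.1 : ℝ), (p.2 : ℝ)) ∈ frontier T
      ∧ ((p.1 : ℝ), (p.2 : ℝ)) ∉ V}.ncard : ℝ) = (r:ℝ) - 1 := by
    rw [hset2, Set.ncard_image_of_injective _ (fun a b h => by simpa using h)]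
    rw [← Finset.coe_Icc, Set.ncard_coe_finset, Int.card_Icc]
    have h0 : r - 1 + 1 - 1 = r - 1 := by ring
    rw [h0]
    have h1 : ((r - 1).toNat : ℤ) = r - 1 := Int.toNat_of_nonneg (by omega)
    calc ((((r - 1).toNat : ℕ)) : ℝ) = (((r - 1).toNat : ℤ) : ℝ) := by push_cast; ring
    _ = ((r : ℝ) - 1) := by rw [h1]; push_cast; ring
  have hc3 : ({p : ℤ × ℤ | ((p.1 : ℝ), (p.2 : ℝ)) ∈ V
      ∧ ((p.1 : ℝ), (p.2 : ℝ)) ≠ (0, 0)}.ncard : ℝ) = 1 := by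
    rw [hset3, Set.ncard_singleton]; norm_num
  show 4 * (A - (_ + _ + _)) = _
  rw [hA, hc1, hc2, hc3]
  field_simp
  ring
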